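/- Let m, n be positive integers with m ≤ 2n, and let f ∈ C^{2n+1}(ℝ) satisfy |f^{(2n+1)}(x)| ≤ M for all x ∈ ℝ. Then the residual R_f(x,n,m,h) of the general-order central difference formula satisfies |R_f(x,n,m,h)| ≤ M·m·(e·m/2)^{2n} for all x ∈ ℝ and h > 0. -/

import Mathlib

open Finset

lemma prod_abs_int (n : ℕ) :
    ∏ l ∈ (Finset.Icc (-(n:ℤ)) n).erase 0, |(l:ℝ)| = (n.factorial : ℝ)^2 := by
  induction n with
  | zero => simp
  | succ n ih =>
    have hset : (Finset.Icc (-((n+1:ℕ)):ℤ) (n+1:ℕ)).erase 0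
        = insert (-((n:ℤ)+1)) (insert ((n:ℤ)+1) ((Finset.Icc (-(n:ℤ)) n).erase 0)) := by
      ext l
      simp only [mem_erase, mem_Icc, mem_insert]
      push_cast
      omega
    rw [hset, Finset.prod_insert, Finset.prod_insert, ih]
    · push_cast
      rw [Nat.factorial_succ]
      push_cast
      rw [abs_neg, abs_of_nonneg (by positivity)]
      ring
    · simp only [mem_erase, mem_Icc]; omega
    · simp only [mem_insert, mem_erase, mem_Icc]; omega

lemma term_bound (m n : ℕ) (hm : 1 ≤ m) (hmn : m ≤ 2*n) {j : ℤ}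
    (hj : j ∈ (Finset.Icc (-(n:ℤ)) n).erase 0) :
    |(j:ℝ)^(2*n+1) * (∑ T ∈ Finset.powersetCard (2*n-m)
        (((Finset.Icc (-(n:ℤ)) n).erase 0).erase j), ∏ l ∈ T, (l:ℝ))|
      ≤ (n:ℝ)^(2*n) * (((2*n-1).choose (2*n-m) : ℕ):ℝ) * (n.factorial:ℝ)^2 := by
  simp only [mem_erase, mem_Icc] at hj
  obtain ⟨hj0, hj1, hj2⟩ := hj
  have hjabs : |(j:ℝ)| ≤ (n:ℝ) := by
    rw [← Int.cast_abs]
    exact_mod_cast abs_le.mpr ⟨hj1, hj2⟩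
  have hjabs1 : (1:ℝ) ≤ |(j:ℝ)| := by
    rw [← Int.cast_abs]
    have : (1:ℤ) ≤ |j| := Int.one_le_abs (by omega)
    exact_mod_cast this
  set S' := ((Finset.Icc (-(n:ℤ)) n).erase 0).erase j with hS'
  have hmemj : j ∈ (Finset.Icc (-(n:ℤ)) n).erase 0 := by
    simp only [mem_erase, mem_Icc]; omega
  -- card of S'
  have hcard : S'.card = 2*n - 1 := by
    rw [hS', Finset.card_erase_of_mem hmemj, Finset.card_erase_of_mem
      (by simp only [mem_Icc]; omega), Int.card_Icc]
    omega
  -- each subset product bound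
  have hsub : ∀ T ∈ Finset.powersetCard (2*n-m) S',
      |(j:ℝ)| * |∏ l ∈ T, (l:ℝ)| ≤ (n.factorial:ℝ)^2 := by
    intro T hT
    obtain ⟨hTsub, hTcard⟩ := Finset.mem_powersetCard.1 hT
    rw [abs_prod]
    have h1 : ∏ l ∈ T, |(l:ℝ)| ≤ ∏ l ∈ S', |(l:ℝ)| := by
      rw [← Finset.prod_sdiff hTsub]
      apply le_mul_of_one_le_left (Finset.prod_nonneg (fun i _ => abs_nonneg _))
      have h1 : (1:ℝ) = ∏ _x ∈ S' \ T, (1:ℝ) := by simp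
      rw [h1]
      apply Finset.prod_le_prod (fun i _ => zero_le_one)
      intro i hi
      rw [Finset.mem_sdiff, hS'] at hi
      have hi0 : i ≠ 0 := by
        have := hi.1
        simp only [mem_erase] at this
        exact this.2.1
      rw [← Int.cast_abs]
      have : (1:ℤ) ≤ |i| := Int.one_le_abs hi0
      exact_mod_cast this
    calc |(j:ℝ)| * ∏ l ∈ T, |(l:ℝ)| ≤ |(j:ℝ)| * ∏ l ∈ S', |(l:ℝ)| := by
          apply mul_le_mul_of_nonneg_left h1 (abs_nonneg _)
      _ = ∏ l ∈ (Finset.Icc (-(n:ℤ)) n).erase 0, |(l:ℝ)| := by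
          rw [hS']
          exact Finset.mul_prod_erase ((Finset.Icc (-(n:ℤ)) n).erase 0) (fun l : ℤ => |(l:ℝ)|) hmemj
      _ = (n.factorial:ℝ)^2 := prod_abs_int n
  calc |(j:ℝ)^(2*n+1) * ∑ T ∈ Finset.powersetCard (2*n-m) S', ∏ l ∈ T, (l:ℝ)|
      = |(j:ℝ)|^(2*n) * (|(j:ℝ)| * |∑ T ∈ Finset.powersetCard (2*n-m) S', ∏ l ∈ T, (l:ℝ)|) := by
        rw [abs_mul, abs_pow, pow_succ]
        ring
    _ ≤ |(j:ℝ)|^(2*n) * (|(j:ℝ)| * ∑ T ∈ Finset.powersetCard (2*n-m) S', |∏ l ∈ T, (l:ℝ)|) := by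
        apply mul_le_mul_of_nonneg_left _ (by positivity)
        exact mul_le_mul_of_nonneg_left (Finset.abs_sum_le_sum_abs _ _) (abs_nonneg _)
    _ = |(j:ℝ)|^(2*n) * ∑ T ∈ Finset.powersetCard (2*n-m) S', |(j:ℝ)| * |∏ l ∈ T, (l:ℝ)| := by
        rw [Finset.mul_sum]
    _ ≤ (n:ℝ)^(2*n) * ∑ T ∈ Finset.powersetCard (2*n-m) S', (n.factorial:ℝ)^2 := by
        apply mul_le_mul (pow_le_pow_left₀ (abs_nonneg _) hjabs _)
          (Finset.sum_le_sum hsub) (by positivity) (by positivity)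
    _ = (n:ℝ)^(2*n) * ((Finset.powersetCard (2*n-m) S').card * (n.factorial:ℝ)^2) := by
        rw [Finset.sum_const, nsmul_eq_mul]
    _ = (n:ℝ)^(2*n) * (((2*n-1).choose (2*n-m) : ℕ):ℝ) * (n.factorial:ℝ)^2 := by
        rw [Finset.card_powersetCard, hcard]
        push_cast
        ring

lemma pow_le_factorial_exp (k : ℕ) : (k:ℝ)^k ≤ (k.factorial : ℝ) * Real.exp 1 ^ k := by
  have h1 : (k:ℝ)^k / k.factorial ≤ Real.exp k := by
    refine le_trans ?_ (Real.sum_le_exp_of_nonneg (x := (k:ℝ)) (by positivity) (k+1))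
    exact Finset.single_le_sum (f := fun i => (k:ℝ)^i / i.factorial)
      (fun i _ => by positivity) (Finset.self_mem_range_succ k)
  have h2 : Real.exp (k:ℝ) = Real.exp 1 ^ k := by
    rw [← Real.exp_nat_mul]; norm_num
  rw [div_le_iff₀ (by positivity), h2] at h1
  linarith

lemma key_pow_ineq (m n : ℕ) (hm : 1 ≤ m) (hn : 1 ≤ n) (hmn : m ≤ 2*n) :
    ((2*n : ℕ):ℝ)^(m-1) ≤ (m:ℝ)^(2*n) := by
  rcases Nat.lt_or_ge m 3 with h3 | h3
  · interval_cases m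
    · simp
    · calc ((2*n:ℕ):ℝ)^(2-1) = ((2*n:ℕ):ℝ) := by norm_num
        _ ≤ ((2^(2*n) : ℕ):ℝ) := by exact_mod_cast (Nat.lt_two_pow_self (n := 2*n)).le
        _ = ((2:ℕ):ℝ)^(2*n) := by push_cast; ring
  · set k : ℝ := ((2*n:ℕ):ℝ) with hk
    set μ : ℝ := ((m:ℕ):ℝ) with hμ
    have hμ3 : (3:ℝ) ≤ μ := by rw [hμ]; exact_mod_cast h3
    have hμk : μ ≤ k := by rw [hμ, hk]; exact_mod_cast hmn
    have hμ0 : (0:ℝ) < μ := by linarith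
    have hk0 : (0:ℝ) < k := by linarith
    have hlog1 : 1 ≤ Real.log μ := by
      rw [Real.le_log_iff_exp_le hμ0]
      calc Real.exp 1 ≤ 2.7182818286 := Real.exp_one_lt_d9.le
        _ ≤ μ := by linarith
    have hlogdiv : Real.log (k/μ) ≤ k/μ - 1 := Real.log_le_sub_one_of_pos (by positivity)
    have hlogk : Real.log k = Real.log μ + Real.log (k/μ) := by
      rw [Real.log_div (ne_of_gt hk0) (ne_of_gt hμ0)]; ring
    have hgoal : (μ - 1) * Real.log k ≤ k * Real.log μ := by
      have h1 : Real.log k ≤ Real.log μ + (k/μ - 1) := by rw [hlogk]; linarith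
      have h2 : (μ - 1) * (k/μ - 1) ≤ k - μ := by
        rw [div_sub_one (ne_of_gt hμ0)]
        have he : (μ - 1) * ((k - μ)/μ) = (μ-1)*(k-μ)/μ := by ring
        rw [he, div_le_iff₀ hμ0]
        nlinarith
      have h3 : k - μ ≤ (k - μ + 1) * Real.log μ := by nlinarith
      have h4 : (μ - 1) * Real.log k ≤ (μ-1) * Real.log μ + (μ - 1)*(k/μ - 1) := by
        nlinarith [Real.log_nonneg (by linarith : (1:ℝ) ≤ μ)]
      nlinarith
    rw [← Real.exp_log (x := k^(m-1)) (by positivity),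
        ← Real.exp_log (x := μ^(2*n)) (by positivity)]
    apply Real.exp_le_exp.2
    rw [Real.log_pow, Real.log_pow]
    have hc : ((m-1:ℕ):ℝ) ≤ μ - 1 := by
      rw [hμ, Nat.cast_sub hm]; push_cast; linarith
    have hc2 : k = ((2*n:ℕ):ℝ) := rfl
    calc ((m-1:ℕ):ℝ) * Real.log k ≤ (μ-1) * Real.log k :=
          mul_le_mul_of_nonneg_right hc (Real.log_nonneg (by linarith))
      _ ≤ k * Real.log μ := hgoal
      _ = ((2*n:ℕ):ℝ) * Real.log μ := by rw [← hc2]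

-- L2: sum of 1/denominators
lemma denom_sum_le (n : ℕ) :
    ∑ j ∈ (Finset.Icc (-(n:ℤ)) n).erase 0,
      (1:ℝ) / (((n + j).toNat.factorial : ℝ) * ((n - j).toNat.factorial : ℝ))
      ≤ (4:ℝ)^n / ((2*n).factorial : ℝ) := by
  have hsub : (Finset.Icc (-(n:ℤ)) n).erase 0 ⊆ Finset.Icc (-(n:ℤ)) n := Finset.erase_subset _ _
  have h1 : ∑ j ∈ (Finset.Icc (-(n:ℤ)) n).erase 0,
      (1:ℝ) / (((n + j).toNat.factorial : ℝ) * ((n - j).toNat.factorial : ℝ))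
      ≤ ∑ j ∈ Finset.Icc (-(n:ℤ)) n,
      (1:ℝ) / (((n + j).toNat.factorial : ℝ) * ((n - j).toNat.factorial : ℝ)) :=
    Finset.sum_le_sum_of_subset_of_nonneg hsub (fun i _ _ => by positivity)
  refine h1.trans ?_
  have himg : Finset.Icc (-(n:ℤ)) n = (Finset.range (2*n+1)).image (fun k : ℕ => (k:ℤ) - n) := by
    ext l
    simp only [Finset.mem_Icc, Finset.mem_image, Finset.mem_range]
    constructor
    · intro ⟨h1, h2⟩
      refine ⟨(l + n).toNat, by omega, ?_⟩
      omega
    · rintro ⟨k, hk, rfl⟩; omega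
  rw [himg, Finset.sum_image (by intro a _ b _ hab; have hab' : (a:ℤ) - n = (b:ℤ) - n := hab; omega)]
  have hterm : ∀ k ∈ Finset.range (2*n+1),
      (1:ℝ) / (((n + ((k:ℤ) - n)).toNat.factorial : ℝ) * ((n - ((k:ℤ) - n)).toNat.factorial : ℝ))
      = ((2*n).choose k : ℝ) / ((2*n).factorial : ℝ) := by
    intro k hk
    simp only [Finset.mem_range] at hk
    have h1 : ((n:ℤ) + ((k:ℤ) - n)).toNat = k := by omega
    have h2 : ((n:ℤ) - ((k:ℤ) - n)).toNat = 2*n - k := by omega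
    rw [h1, h2]
    have hkle : k ≤ 2*n := by omega
    have key : ((2*n).choose k : ℝ) * ((k.factorial:ℝ) * ((2*n-k).factorial:ℝ)) = ((2*n).factorial:ℝ) := by
      rw [← Nat.choose_mul_factorial_mul_factorial hkle]
      push_cast
      ring
    have hk0 : (0:ℝ) < (k.factorial:ℝ) := by positivity
    have hk1 : (0:ℝ) < ((2*n-k).factorial:ℝ) := by positivity
    have hF : (0:ℝ) < ((2*n).factorial:ℝ) := by positivity
    field_simp
    linear_combination -key
  rw [Finset.sum_congr rfl hterm, ← Finset.sum_div]
  rw [← Nat.cast_sum]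
  rw [Nat.sum_range_choose]
  apply le_of_eq
  push_cast
  rw [pow_mul]
  norm_num

-- L3
lemma fac_sq_four (n : ℕ) (hn : 1 ≤ n) :
    ((n.factorial : ℝ))^2 * 4^n ≤ ((2*n+1).factorial : ℝ) := by
  have h4 : 4^n ≤ 2*n * Nat.centralBinom n := Nat.four_pow_le_two_mul_self_mul_centralBinom n hn
  have hc : Nat.centralBinom n * (n.factorial * n.factorial) = (2*n).factorial := by
    have := Nat.choose_mul_factorial_mul_factorial (show n ≤ 2*n by omega)
    simpa [Nat.centralBinom, two_mul, mul_assoc] using this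
  have : n.factorial * n.factorial * 4^n ≤ (2*n+1).factorial := by
    calc n.factorial * n.factorial * 4^n ≤ n.factorial * n.factorial * (2*n*Nat.centralBinom n) :=
          Nat.mul_le_mul_left _ h4
      _ = 2*n * ((2*n).factorial) := by rw [← hc]; ring
      _ ≤ (2*n+1) * (2*n).factorial := Nat.mul_le_mul_right _ (by omega)
      _ = (2*n+1).factorial := rfl
  calc ((n.factorial:ℝ))^2 * 4^n = ((n.factorial * n.factorial * 4^n : ℕ) : ℝ) := by push_cast; ring
    _ ≤ ((2*n+1).factorial : ℝ) := by exact_mod_cast this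

-- L4
lemma fac_choose_le (m n : ℕ) (hm : 1 ≤ m) (hmn : m ≤ 2*n) :
    (m.factorial : ℝ) * ((2*n-1).choose (2*n-m) : ℝ) ≤ (m:ℝ) * ((2*n:ℕ):ℝ)^(m-1) := by
  have hsym : (2*n-1).choose (2*n-m) = (2*n-1).choose (m-1) := by
    rw [← Nat.choose_symm (by omega : m-1 ≤ 2*n-1)]
    congr 1
    omega
  have hd : (m-1).factorial * (2*n-1).choose (m-1) = (2*n-1).descFactorial (m-1) :=
    (Nat.descFactorial_eq_factorial_mul_choose _ _).symm
  have hnat : m.factorial * (2*n-1).choose (2*n-m) ≤ m * (2*n)^(m-1) := by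
    rw [hsym]
    have hmf : m.factorial = m * (m-1).factorial := by
      cases m with
      | zero => omega
      | succ k => simp [Nat.factorial_succ]
    rw [hmf, mul_assoc, hd]
    exact Nat.mul_le_mul_left m ((Nat.descFactorial_le_pow _ _).trans
      (Nat.pow_le_pow_left (by omega) _))
  exact_mod_cast hnat
theorem residual_bound (m n : ℕ) (hm : 1 ≤ m) (hn : 1 ≤ n) (hmn : m ≤ 2 * n)
    (f : ℝ → ℝ) (hf : ContDiff ℝ (2 * n + 1 : ℕ) f) (M : ℝ)
    (hM : ∀ x : ℝ, |iteratedDeriv (2 * n + 1) f x| ≤ M)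
    (ξ : ℤ → ℝ) (h : ℝ) (hh : 0 < h) :
    |((-1 : ℝ) ^ (m + 1) * (m.factorial : ℝ) / ((2 * n + 1).factorial : ℝ)) *
        ∑ j ∈ (Finset.Icc (-(n : ℤ)) n).erase 0,
          (-1 : ℝ) ^ j * iteratedDeriv (2 * n + 1) f (ξ j) * (j : ℝ) ^ (2 * n + 1) *
            (∑ T ∈ Finset.powersetCard (2 * n - m)
                (((Finset.Icc (-(n : ℤ)) n).erase 0).erase j), ∏ l ∈ T, (l : ℝ)) /
            (((n + j).toNat.factorial : ℝ) * ((n - j).toNat.factorial : ℝ))|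
      ≤ M * m * (Real.exp 1 * m / 2) ^ (2 * n) := by
  classical
  have hM0 : 0 ≤ M := (abs_nonneg _).trans (hM 0)
  have hF1 : (0:ℝ) < ((2*n+1).factorial:ℝ) := by positivity
  have hF2 : (0:ℝ) < ((2*n).factorial:ℝ) := by positivity
  set C : ℝ := (((2*n-1).choose (2*n-m) : ℕ):ℝ) with hC
  have hC0 : (0:ℝ) ≤ C := by positivity
  set K : ℝ := (n:ℝ)^(2*n) * C * (n.factorial:ℝ)^2 with hK
  have hK0 : (0:ℝ) ≤ K := by positivity
  have habs_c : |((-1:ℝ))^(m+1) * (m.factorial:ℝ) / ((2*n+1).factorial:ℝ)|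
      = (m.factorial:ℝ) / ((2*n+1).factorial:ℝ) := by
    rw [abs_div, abs_mul, abs_pow, abs_neg, abs_one, one_pow, one_mul,
      abs_of_nonneg (show (0:ℝ) ≤ (m.factorial:ℝ) by positivity),
      abs_of_nonneg hF1.le]
  have hterm : ∀ j ∈ (Finset.Icc (-(n:ℤ)) n).erase 0,
      |(-1:ℝ)^j * iteratedDeriv (2*n+1) f (ξ j) * (j:ℝ)^(2*n+1) *
        (∑ T ∈ Finset.powersetCard (2*n-m)
            (((Finset.Icc (-(n:ℤ)) n).erase 0).erase j), ∏ l ∈ T, (l:ℝ)) /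
        (((n+j).toNat.factorial:ℝ) * ((n-j).toNat.factorial:ℝ))|
      ≤ (M * K) * ((1:ℝ) / (((n+j).toNat.factorial:ℝ) * ((n-j).toNat.factorial:ℝ))) := by
    intro j hj
    have hD : (0:ℝ) < ((n+j).toNat.factorial:ℝ) * ((n-j).toNat.factorial:ℝ) := by positivity
    rw [abs_div, abs_of_pos hD, div_eq_mul_one_div]
    apply mul_le_mul_of_nonneg_right _ (by positivity)
    have e1 : (-1:ℝ)^j * iteratedDeriv (2*n+1) f (ξ j) * (j:ℝ)^(2*n+1) *
        (∑ T ∈ Finset.powersetCard (2*n-m)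
            (((Finset.Icc (-(n:ℤ)) n).erase 0).erase j), ∏ l ∈ T, (l:ℝ))
      = ((-1:ℝ)^j * iteratedDeriv (2*n+1) f (ξ j)) * ((j:ℝ)^(2*n+1) *
        (∑ T ∈ Finset.powersetCard (2*n-m)
            (((Finset.Icc (-(n:ℤ)) n).erase 0).erase j), ∏ l ∈ T, (l:ℝ))) := by ring
    have hpm : |(-1:ℝ)^j| = 1 := by
      rcases Int.even_or_odd j with he | ho
      · rw [he.neg_one_zpow, abs_one]
      · rw [ho.neg_one_zpow, abs_neg, abs_one]
    rw [e1, abs_mul, abs_mul, hpm, one_mul, hK]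
    exact mul_le_mul (hM _) (term_bound m n hm hmn hj) (abs_nonneg _) hM0
  have hsum1 : |∑ j ∈ (Finset.Icc (-(n:ℤ)) n).erase 0,
      (-1:ℝ)^j * iteratedDeriv (2*n+1) f (ξ j) * (j:ℝ)^(2*n+1) *
        (∑ T ∈ Finset.powersetCard (2*n-m)
            (((Finset.Icc (-(n:ℤ)) n).erase 0).erase j), ∏ l ∈ T, (l:ℝ)) /
        (((n+j).toNat.factorial:ℝ) * ((n-j).toNat.factorial:ℝ))|
      ≤ (M * K) * ((4:ℝ)^n / ((2*n).factorial:ℝ)) := by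
    calc |∑ j ∈ (Finset.Icc (-(n:ℤ)) n).erase 0,
        (-1:ℝ)^j * iteratedDeriv (2*n+1) f (ξ j) * (j:ℝ)^(2*n+1) *
          (∑ T ∈ Finset.powersetCard (2*n-m)
              (((Finset.Icc (-(n:ℤ)) n).erase 0).erase j), ∏ l ∈ T, (l:ℝ)) /
          (((n+j).toNat.factorial:ℝ) * ((n-j).toNat.factorial:ℝ))|
        ≤ ∑ j ∈ (Finset.Icc (-(n:ℤ)) n).erase 0,
          |(-1:ℝ)^j * iteratedDeriv (2*n+1) f (ξ j) * (j:ℝ)^(2*n+1) *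
          (∑ T ∈ Finset.powersetCard (2*n-m)
              (((Finset.Icc (-(n:ℤ)) n).erase 0).erase j), ∏ l ∈ T, (l:ℝ)) /
          (((n+j).toNat.factorial:ℝ) * ((n-j).toNat.factorial:ℝ))| :=
        Finset.abs_sum_le_sum_abs _ _
      _ ≤ ∑ j ∈ (Finset.Icc (-(n:ℤ)) n).erase 0,
          (M * K) * ((1:ℝ) / (((n+j).toNat.factorial:ℝ) * ((n-j).toNat.factorial:ℝ))) :=
        Finset.sum_le_sum hterm
      _ = (M * K) * ∑ j ∈ (Finset.Icc (-(n:ℤ)) n).erase 0,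
          (1:ℝ) / (((n+j).toNat.factorial:ℝ) * ((n-j).toNat.factorial:ℝ)) := by
        rw [← Finset.mul_sum]
      _ ≤ (M * K) * ((4:ℝ)^n / ((2*n).factorial:ℝ)) :=
        mul_le_mul_of_nonneg_left (denom_sum_le n) (by positivity)
  rw [abs_mul, habs_c]
  have hfinal : (m.factorial:ℝ) / ((2*n+1).factorial:ℝ) * ((M * K) * ((4:ℝ)^n / ((2*n).factorial:ℝ)))
      ≤ M * m * (Real.exp 1 * m / 2) ^ (2 * n) := by
    have hrw : (m.factorial:ℝ) / ((2*n+1).factorial:ℝ) * ((M * K) * ((4:ℝ)^n / ((2*n).factorial:ℝ)))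
        = M * (((m.factorial:ℝ) * C) * ((n:ℝ)^(2*n)) * ((n.factorial:ℝ)^2 * 4^n))
          / (((2*n+1).factorial:ℝ) * ((2*n).factorial:ℝ)) := by
      rw [hK]; field_simp
    rw [hrw, div_le_iff₀ (by positivity)]
    have ha1 : (m.factorial:ℝ) * C ≤ (m:ℝ) * ((2*n:ℕ):ℝ)^(m-1) := fac_choose_le m n hm hmn
    have ha4 : ((2*n:ℕ):ℝ)^(m-1) ≤ (m:ℝ)^(2*n) := key_pow_ineq m n hm hn hmn
    have ha2 : ((n.factorial:ℝ))^2 * 4^n ≤ ((2*n+1).factorial:ℝ) := fac_sq_four n hn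
    have ha3 : (n:ℝ)^(2*n) ≤ ((2*n).factorial:ℝ) * (Real.exp 1 / 2)^(2*n) := by
      have h1 := pow_le_factorial_exp (2*n)
      have h2 : ((2*n:ℕ):ℝ)^(2*n) = 2^(2*n) * (n:ℝ)^(2*n) := by push_cast; rw [mul_pow]
      rw [h2] at h1
      rw [div_pow, ← mul_div_assoc, le_div_iff₀ (by positivity)]
      calc (n:ℝ)^(2*n) * 2^(2*n) = 2^(2*n) * (n:ℝ)^(2*n) := by ring
        _ ≤ ((2*n).factorial:ℝ) * Real.exp 1 ^ (2*n) := h1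
    have hme : (0:ℝ) ≤ (m:ℝ) := by positivity
    calc M * (((m.factorial:ℝ) * C) * ((n:ℝ)^(2*n)) * ((n.factorial:ℝ)^2 * 4^n))
        ≤ M * (((m:ℝ) * ((2*n:ℕ):ℝ)^(m-1)) * (((2*n).factorial:ℝ) * (Real.exp 1 / 2)^(2*n))
            * ((2*n+1).factorial:ℝ)) := by
          gcongr
      _ ≤ M * (((m:ℝ) * (m:ℝ)^(2*n)) * (((2*n).factorial:ℝ) * (Real.exp 1 / 2)^(2*n))
            * ((2*n+1).factorial:ℝ)) := by
          gcongr
      _ = M * (m:ℝ) * (Real.exp 1 * m / 2) ^ (2 * n)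
            * (((2*n+1).factorial:ℝ) * ((2*n).factorial:ℝ)) := by
          rw [show (Real.exp 1 * m / 2) ^ (2*n) = (Real.exp 1 / 2)^(2*n) * (m:ℝ)^(2*n) by
            rw [← mul_pow]; ring_nf]
          ring
  calc (m.factorial:ℝ) / ((2*n+1).factorial:ℝ) *
      |∑ j ∈ (Finset.Icc (-(n:ℤ)) n).erase 0,
        (-1:ℝ)^j * iteratedDeriv (2*n+1) f (ξ j) * (j:ℝ)^(2*n+1) *
          (∑ T ∈ Finset.powersetCard (2*n-m)
              (((Finset.Icc (-(n:ℤ)) n).erase 0).erase j), ∏ l ∈ T, (l:ℝ)) /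
          (((n+j).toNat.factorial:ℝ) * ((n-j).toNat.factorial:ℝ))|
      ≤ (m.factorial:ℝ) / ((2*n+1).factorial:ℝ) * ((M * K) * ((4:ℝ)^n / ((2*n).factorial:ℝ))) :=
      mul_le_mul_of_nonneg_left hsum1 (by positivity)
    _ ≤ M * m * (Real.exp 1 * m / 2) ^ (2 * n) := hfinal
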